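/- For δ ∈ (0,1/2) and λ ∈ [0,1], the sign of the second derivative of φ_BS^λ(p) = h(δ + (1−2δ)p) − λ h(p) on (0,1) equals the sign of the quadratic (1−λ)(1−2δ)² p² − (1−λ)(1−2δ)² p + λδ(1−δ). In particular, for λ ≥ (1−2δ)², φ_BS^λ is convex on [0,1]. -/

import Mathlib

/-- Binary entropy function. -/
noncomputable def binH (p : ℝ) : ℝ := -p * Real.log p - (1 - p) * Real.log (1 - p)

lemma binH_continuous : Continuous binH := by
  have h := Real.continuous_mul_log
  have h2 : Continuous fun p : ℝ => -(p * Real.log p) - ((1 - p) * Real.log (1 - p)) :=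
    h.neg.sub (h.comp (continuous_const.sub continuous_id))
  have heq : binH = fun p : ℝ => -(p * Real.log p) - ((1 - p) * Real.log (1 - p)) := by
    funext p; simp [binH, neg_mul]
  rw [heq]; exact h2

lemma binH_hasDerivAt {p : ℝ} (h0 : 0 < p) (h1 : p < 1) :
    HasDerivAt binH (Real.log (1 - p) - Real.log p) p := by
  have hA : HasDerivAt (fun q : ℝ => q * Real.log q) (Real.log p + 1) p :=
    Real.hasDerivAt_mul_log h0.ne'
  have hinner : HasDerivAt (fun q : ℝ => 1 - q) (-1) p := by
    simpa using (hasDerivAt_id p).const_sub 1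
  have hB : HasDerivAt (fun q : ℝ => (1 - q) * Real.log (1 - q))
      ((Real.log (1 - p) + 1) * (-1)) p :=
    (Real.hasDerivAt_mul_log (x := 1 - p) (by linarith)).comp p hinner
  have this : HasDerivAt (fun q : ℝ => -(q * Real.log q) - (1 - q) * Real.log (1 - q))
      (-(Real.log p + 1) - (Real.log (1 - p) + 1) * -1) p := hA.neg.sub hB
  have heq : (fun q : ℝ => -(q * Real.log q) - (1 - q) * Real.log (1 - q)) = binH := by
    funext q; simp [binH, neg_mul]
  rw [heq] at this
  convert this using 1
  ring

lemma sign_div_pos {x d : ℝ} (hd : 0 < d) : Real.sign (x / d) = Real.sign x := by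
  rcases lt_trichotomy x 0 with h | h | h
  · rw [Real.sign_of_neg h, Real.sign_of_neg (div_neg_of_neg_of_pos h hd)]
  · simp [h]
  · rw [Real.sign_of_pos h, Real.sign_of_pos (div_pos h hd)]

/-- For `φ_BS^λ(p) = h(δ+(1−2δ)p) − λ h(p)`, `δ ∈ (0,1/2)`, `λ ∈ [0,1]`: on `(0,1)` the
sign of the second derivative equals the sign of
`(1−λ)(1−2δ)²p² − (1−λ)(1−2δ)²p + λδ(1−δ)`; for `λ ≥ (1−2δ)²` the function is convex
on `[0,1]`. -/
theorem stmt12 (δ lam : ℝ) (hδ : δ ∈ Set.Ioo (0 : ℝ) (1 / 2)) (hlam : lam ∈ Set.Icc (0 : ℝ) 1) :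
    (∀ p ∈ Set.Ioo (0 : ℝ) 1,
      Real.sign (deriv (deriv (fun q => binH (δ + (1 - 2 * δ) * q) - lam * binH q)) p)
        = Real.sign ((1 - lam) * (1 - 2 * δ) ^ 2 * p ^ 2
            - (1 - lam) * (1 - 2 * δ) ^ 2 * p + lam * δ * (1 - δ))) ∧
    ((1 - 2 * δ) ^ 2 ≤ lam →
      ConvexOn ℝ (Set.Icc (0 : ℝ) 1) (fun q => binH (δ + (1 - 2 * δ) * q) - lam * binH q)) := by
  obtain ⟨hδ0, hδ1⟩ := hδ
  obtain ⟨hl0, hl1⟩ := hlam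
  set c : ℝ := 1 - 2 * δ with hc_def
  have hc0 : 0 < c := by simp only [hc_def]; linarith
  have hc1 : c < 1 := by simp only [hc_def]; linarith
  set f : ℝ → ℝ := fun q => binH (δ + c * q) - lam * binH q with hf_def
  -- first derivative on (0,1)
  set g : ℝ → ℝ := fun q =>
    c * (Real.log (1 - (δ + c * q)) - Real.log (δ + c * q))
      - lam * (Real.log (1 - q) - Real.log q) with hg_def
  have ha_mem : ∀ q : ℝ, 0 ≤ q → q ≤ 1 → 0 < δ + c * q ∧ δ + c * q < 1 := by
    intro q hq0 hq1
    constructor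
    · nlinarith
    · nlinarith
  have hderiv1 : ∀ p ∈ Set.Ioo (0 : ℝ) 1, HasDerivAt f (g p) p := by
    rintro p ⟨hp0, hp1⟩
    obtain ⟨ha0, ha1⟩ := ha_mem p hp0.le hp1.le
    have hinner : HasDerivAt (fun q : ℝ => δ + c * q) c p := by
      simpa using ((hasDerivAt_id p).const_mul c).const_add δ
    have h1 : HasDerivAt (fun q : ℝ => binH (δ + c * q))
        ((Real.log (1 - (δ + c * p)) - Real.log (δ + c * p)) * c) p :=
      by have := (binH_hasDerivAt ha0 ha1).comp p hinner; exact this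
    have h2 : HasDerivAt (fun q : ℝ => lam * binH q)
        (lam * (Real.log (1 - p) - Real.log p)) p :=
      (binH_hasDerivAt hp0 hp1).const_mul lam
    have this : HasDerivAt (fun q : ℝ => binH (δ + c * q) - lam * binH q)
        ((Real.log (1 - (δ + c * p)) - Real.log (δ + c * p)) * c
          - lam * (Real.log (1 - p) - Real.log p)) p := h1.sub h2
    convert this using 1
    simp only [hg_def]; ring
  -- second derivative value
  set g' : ℝ → ℝ := fun p =>
    c * ((1 - (δ + c * p))⁻¹ * (-c) - (δ + c * p)⁻¹ * c)
      - lam * ((1 - p)⁻¹ * (-1) - p⁻¹) with hg'_def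
  have hderiv2 : ∀ p ∈ Set.Ioo (0 : ℝ) 1, HasDerivAt g (g' p) p := by
    rintro p ⟨hp0, hp1⟩
    obtain ⟨ha0, ha1⟩ := ha_mem p hp0.le hp1.le
    have hinner : HasDerivAt (fun q : ℝ => δ + c * q) c p := by
      simpa using ((hasDerivAt_id p).const_mul c).const_add δ
    have hinner2 : HasDerivAt (fun q : ℝ => 1 - (δ + c * q)) (-c) p := by
      simpa using hinner.const_sub 1
    have hinner3 : HasDerivAt (fun q : ℝ => 1 - q) (-1 : ℝ) p := by
      simpa using (hasDerivAt_id p).const_sub 1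
    have hL1 : HasDerivAt (fun q : ℝ => Real.log (1 - (δ + c * q)))
        ((1 - (δ + c * p))⁻¹ * (-c)) p :=
      (Real.hasDerivAt_log (by linarith)).comp p hinner2
    have hL2 : HasDerivAt (fun q : ℝ => Real.log (δ + c * q))
        ((δ + c * p)⁻¹ * c) p :=
      (Real.hasDerivAt_log (by linarith)).comp p hinner
    have hL3 : HasDerivAt (fun q : ℝ => Real.log (1 - q)) ((1 - p)⁻¹ * (-1)) p :=
      (Real.hasDerivAt_log (by linarith)).comp p hinner3
    have hL4 : HasDerivAt (fun q : ℝ => Real.log q) p⁻¹ p :=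
      Real.hasDerivAt_log (by linarith)
    exact ((hL1.sub hL2).const_mul c).sub ((hL3.sub hL4).const_mul lam)
  -- deriv f = g on (0,1)
  have hdf : ∀ p ∈ Set.Ioo (0 : ℝ) 1, deriv f p = g p := fun p hp =>
    (hderiv1 p hp).deriv
  have hdd : ∀ p ∈ Set.Ioo (0 : ℝ) 1, deriv (deriv f) p = g' p := by
    intro p hp
    have hev : deriv f =ᶠ[nhds p] g :=
      Filter.eventuallyEq_of_mem (isOpen_Ioo.mem_nhds hp) hdf
    rw [hev.deriv_eq]
    exact (hderiv2 p hp).deriv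
  -- g' p = Q p / D with D > 0
  have hQ : ∀ p ∈ Set.Ioo (0 : ℝ) 1,
      g' p = ((1 - lam) * c ^ 2 * p ^ 2 - (1 - lam) * c ^ 2 * p + lam * δ * (1 - δ))
        / (p * (1 - p) * ((δ + c * p) * (1 - (δ + c * p)))) := by
    rintro p ⟨hp0, hp1⟩
    obtain ⟨ha0, ha1⟩ := ha_mem p hp0.le hp1.le
    have h1 : p ≠ 0 := hp0.ne'
    have h2 : (1 : ℝ) - p ≠ 0 := by linarith
    have h3 : δ + c * p ≠ 0 := ha0.ne'
    have h4 : 1 - (δ + c * p) ≠ 0 := by linarith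
    simp only [hg'_def, hc_def] at *
    field_simp
    ring
  constructor
  · rintro p hp
    obtain ⟨hp0, hp1⟩ := hp
    obtain ⟨ha0, ha1⟩ := ha_mem p hp0.le hp1.le
    rw [hdd p ⟨hp0, hp1⟩, hQ p ⟨hp0, hp1⟩, sign_div_pos]
    exact mul_pos (mul_pos hp0 (by linarith)) (mul_pos ha0 (by linarith))
  · intro hlc
    have hcont : Continuous f :=
      (binH_continuous.comp (continuous_const.add (continuous_const.mul continuous_id))).sub
        (continuous_const.mul binH_continuous)
    have hint : interior (Set.Icc (0 : ℝ) 1) = Set.Ioo 0 1 := interior_Icc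
    refine convexOn_of_deriv2_nonneg (convex_Icc 0 1) hcont.continuousOn ?_ ?_ ?_
    · rw [hint]
      exact fun p hp => ((hderiv1 p hp).differentiableAt).differentiableWithinAt
    · rw [hint]
      intro p hp
      have hev : deriv f =ᶠ[nhds p] g :=
        Filter.eventuallyEq_of_mem (isOpen_Ioo.mem_nhds hp) hdf
      exact (((hderiv2 p hp).differentiableAt).congr_of_eventuallyEq
        hev).differentiableWithinAt
    · rw [hint]
      intro p hp
      have : deriv^[2] f p = deriv (deriv f) p := rfl
      rw [this, hdd p hp, hQ p hp]
      obtain ⟨hp0, hp1⟩ := hp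
      obtain ⟨ha0, ha1⟩ := ha_mem p hp0.le hp1.le
      apply div_nonneg _
        (le_of_lt (mul_pos (mul_pos hp0 (by linarith)) (mul_pos ha0 (by linarith))))
      simp only [hc_def] at hlc ⊢
      nlinarith [mul_nonneg (mul_nonneg (sub_nonneg.2 hl1) (sq_nonneg (1 - 2 * δ)))
          (sq_nonneg (2 * p - 1)),
        mul_nonneg (mul_nonneg hδ0.le (by linarith : (0:ℝ) ≤ 1 - δ)) (sub_nonneg.2 hlc),
        mul_nonneg (sq_nonneg (1 - 2 * δ)) (sub_nonneg.2 hlc)]
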